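/- Let y = x* + η ∈ ℝ^n with x* in the span of orthonormal vectors v₁,...,v_p (p ≤ n), and extend to an orthonormal basis v₁,...,v_n. Define the estimate x_t = Σ_{i=1}^n (1 − (1 − α σ_i²)^t) ⟨y, v_i⟩ v_i with 0 < α σ_i² ≤ 1 for all i. Then ‖x_t − x*‖₂² ≤ Σ_{i=1}^p (1 − α σ_p²)^{2t} ⟨x*, v_i⟩² · 2 + 2 Σ_{i=1}^n (1 − (1 − α σ_i²)^t)² ⟨η, v_i⟩², i.e., the error splits into a signal-fitting term decaying geometrically in t and a noise-fitting term bounded by the fitted noise energy. -/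

import Mathlib

open RealInnerProductSpace

/-- error decomposition for the linearized gradient-descent estimate:
signal-fitting term decaying geometrically in `t` plus noise-fitting term. -/
theorem gd_denoising_decomposition (n : ℕ) (b : OrthonormalBasis (Fin n) ℝ (EuclideanSpace ℝ (Fin n)))
    (σ : Fin n → ℝ) (hσpos : ∀ i, 0 < σ i) (hσmono : ∀ i j : Fin n, i ≤ j → σ j ≤ σ i)
    (α : ℝ) (hα : 0 < α) (hα1 : ∀ i, α * (σ i) ^ 2 ≤ 1)
    (p : Fin n) (xstar η : EuclideanSpace ℝ (Fin n))
    (hspan : ∀ i : Fin n, p < i → ⟪xstar, b i⟫ = 0)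
    (y : EuclideanSpace ℝ (Fin n)) (hy : y = xstar + η) (t : ℕ) :
    ‖(∑ i, ((1 - (1 - α * (σ i) ^ 2) ^ t) * ⟪y, b i⟫) • b i) - xstar‖ ^ 2 ≤
      2 * (∑ i ∈ Finset.univ.filter (· ≤ p),
            (1 - α * (σ p) ^ 2) ^ (2 * t) * ⟪xstar, b i⟫ ^ 2) +
      2 * (∑ i, (1 - (1 - α * (σ i) ^ 2) ^ t) ^ 2 * ⟪η, b i⟫ ^ 2) := by
  subst hy
  set c : Fin n → ℝ := fun i =>
    -((1 - α * (σ i) ^ 2) ^ t) * ⟪xstar, b i⟫ + (1 - (1 - α * (σ i) ^ 2) ^ t) * ⟪η, b i⟫ with hc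
  have hvec : (∑ i, ((1 - (1 - α * (σ i) ^ 2) ^ t) * ⟪xstar + η, b i⟫) • b i) - xstar
      = ∑ i, c i • b i := by
    nth_rewrite 2 [← b.sum_repr' xstar]
    rw [← Finset.sum_sub_distrib]
    refine Finset.sum_congr rfl fun i _ => ?_
    rw [← sub_smul]
    congr 1
    have : ⟪xstar + η, b i⟫ = ⟪xstar, b i⟫ + ⟪η, b i⟫ := inner_add_left _ _ _
    rw [this, hc]
    simp only [real_inner_comm (b i) xstar]
    ring
  rw [hvec]
  have hnorm : ‖∑ i, c i • b i‖ ^ 2 = ∑ i, c i ^ 2 := by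
    rw [← real_inner_self_eq_norm_sq, b.orthonormal.inner_sum]
    simp [sq, starRingEnd_apply]
  rw [hnorm]
  have hbound : ∀ i : Fin n, c i ^ 2 ≤
      2 * ((1 - α * (σ i) ^ 2) ^ (2 * t) * ⟪xstar, b i⟫ ^ 2) +
      2 * ((1 - (1 - α * (σ i) ^ 2) ^ t) ^ 2 * ⟪η, b i⟫ ^ 2) := by
    intro i
    have h := sq_nonneg ((1 - α * (σ i) ^ 2) ^ t * ⟪xstar, b i⟫ +
      (1 - (1 - α * (σ i) ^ 2) ^ t) * ⟪η, b i⟫)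
    have h2t : (1 - α * (σ i) ^ 2) ^ (2 * t) = ((1 - α * (σ i) ^ 2) ^ t) ^ 2 := by
      rw [mul_comm 2 t, pow_mul]
    rw [h2t, hc]
    simp only []
    nlinarith [h]
  calc ∑ i, c i ^ 2
      ≤ ∑ i, (2 * ((1 - α * (σ i) ^ 2) ^ (2 * t) * ⟪xstar, b i⟫ ^ 2) +
          2 * ((1 - (1 - α * (σ i) ^ 2) ^ t) ^ 2 * ⟪η, b i⟫ ^ 2)) :=
        Finset.sum_le_sum fun i _ => hbound i
    _ = 2 * (∑ i, (1 - α * (σ i) ^ 2) ^ (2 * t) * ⟪xstar, b i⟫ ^ 2) +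
        2 * (∑ i, (1 - (1 - α * (σ i) ^ 2) ^ t) ^ 2 * ⟪η, b i⟫ ^ 2) := by
        rw [Finset.sum_add_distrib, ← Finset.mul_sum, ← Finset.mul_sum]
    _ ≤ _ := by
        gcongr 2 * ?_ + 2 * ?_
        · rw [← Finset.sum_filter_add_sum_filter_not Finset.univ (· ≤ p)]
          have hz : ∑ i ∈ Finset.univ.filter (¬ · ≤ p),
              (1 - α * (σ i) ^ 2) ^ (2 * t) * ⟪xstar, b i⟫ ^ 2 = 0 := by
            apply Finset.sum_eq_zero
            intro i hi
            simp only [Finset.mem_filter, not_le] at hi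
            rw [hspan i hi.2]; ring
          rw [hz, add_zero]
          apply Finset.sum_le_sum
          intro i hi
          simp only [Finset.mem_filter] at hi
          have hσ : σ p ≤ σ i := hσmono i p hi.2
          have h1 : 0 ≤ 1 - α * (σ i) ^ 2 := by linarith [hα1 i]
          have h2 : 1 - α * (σ i) ^ 2 ≤ 1 - α * (σ p) ^ 2 := by
            have hsq : (σ p) ^ 2 ≤ (σ i) ^ 2 := by nlinarith [(hσpos p).le]
            nlinarith [hα.le]
          have hp := pow_le_pow_left₀ h1 h2 (2 * t)
          exact mul_le_mul_of_nonneg_right hp (sq_nonneg _)
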